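/- Let G be a finite graph with m vertices. Then the reduced simplicial cohomology groups H̃^r(I(G); ℚ) of the independence complex of G vanish for all r > m/2 − 1. -/

import Mathlib

open Finset

/-- An abstract simplicial complex on vertex type `V`, given by its set of faces
(downward closed). -/
structure SCpx (V : Type*) where
  faces : Set (Finset V)
  down : ∀ s t : Finset V, s ⊆ t → t ∈ faces → s ∈ faces

variable {V : Type*} [Fintype V] [DecidableEq V]

/-- The independence complex of a graph: faces are the independent sets. -/
def indepCpx (G : SimpleGraph V) : SCpx V where
  faces := {s | ∀ u ∈ s, ∀ v ∈ s, ¬ G.Adj u v}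
  down := fun s t hst ht u hu v hv => ht u (hst hu) v (hst hv)

/-- An enumeration of the vertices, used to fix orientation signs. -/
noncomputable def ordV (v : V) : ℕ := ((Fintype.equivFin V) v : ℕ)

/-- Reduced simplicial cochains: `cochain K d` is spanned by the faces of
cardinality `d` (so `d = 0` corresponds to the empty face, sitting in
reduced degree `-1`). -/
abbrev cochain (K : SCpx V) (d : ℕ) : Type _ :=
  {s : Finset V // s ∈ K.faces ∧ s.card = d} → ℚ

/-- The simplicial coboundary map on reduced cochains. -/
noncomputable def delta (K : SCpx V) (d : ℕ) : cochain K d →ₗ[ℚ] cochain K (d + 1) where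
  toFun f t := ∑ v ∈ t.1.attach,
    (-1 : ℚ) ^ ((t.1.filter fun w => ordV w < ordV v.1).card) *
      f ⟨t.1.erase v.1, K.down _ _ (Finset.erase_subset _ _) t.2.1, by
        simp [Finset.card_erase_of_mem v.2, t.2.2]⟩
  map_add' f g := by
    funext t
    simp only [Pi.add_apply, mul_add, Finset.sum_add_distrib]
  map_smul' c f := by
    funext t
    simp only [Pi.smul_apply, smul_eq_mul, RingHom.id_apply, Finset.mul_sum]
    exact Finset.sum_congr rfl fun v _ => by ring

/-- The range of the previous coboundary (interpreted as `⊥` in lowest degree). -/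
noncomputable def prevRange (K : SCpx V) : (d : ℕ) → Submodule ℚ (cochain K d)
  | 0 => ⊥
  | (d + 1) => LinearMap.range (delta K d)

/-- Reduced simplicial cohomology over `ℚ` in shifted indexing:
`Hq K d` is `H̃^{d-1}(K; ℚ)`. -/
abbrev Hq (K : SCpx V) (d : ℕ) :=
  ↥(LinearMap.ker (delta K d)) ⧸
    (prevRange K d).comap (LinearMap.ker (delta K d)).subtype

/-- `reducedBetti K r = dim_ℚ H̃^r(K; ℚ)`. -/
noncomputable def reducedBetti (K : SCpx V) (r : ℤ) : ℕ :=
  if r < -1 then 0 else Module.finrank ℚ (Hq K (r + 1).toNat)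

noncomputable def sgn (u : V) (s : Finset V) : ℚ :=
  (-1 : ℚ) ^ ((s.filter fun w => ordV w < ordV u).card)

lemma sgn_sq (u : V) (s : Finset V) : sgn u s * sgn u s = 1 := by
  unfold sgn
  rw [← pow_add, ← two_mul, pow_mul]
  norm_num

lemma ordV_inj : Function.Injective (ordV (V := V)) := by
  intro a b h
  have := (Fintype.equivFin V).injective (Fin.ext h)
  exact this

open Classical in
noncomputable def extc (K : SCpx V) (d : ℕ) (f : cochain K d) (s : Finset V) : ℚ :=
  if h : s ∈ K.faces ∧ s.card = d then f ⟨s, h⟩ else 0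

lemma extc_of (K : SCpx V) (d : ℕ) (f : cochain K d) {s : Finset V}
    (h1 : s ∈ K.faces) (h2 : s.card = d) : extc K d f s = f ⟨s, h1, h2⟩ := by
  unfold extc
  exact dif_pos ⟨h1, h2⟩

lemma extc_val (K : SCpx V) (d : ℕ) (f : cochain K d)
    (t : {s : Finset V // s ∈ K.faces ∧ s.card = d}) : extc K d f t.1 = f t := by
  rw [extc_of K d f t.2.1 t.2.2]

lemma delta_apply (K : SCpx V) (d : ℕ) (f : cochain K d)
    (t : {s : Finset V // s ∈ K.faces ∧ s.card = d + 1}) :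
    delta K d f t = ∑ u ∈ t.1, sgn u t.1 * extc K d f (t.1.erase u) := by
  rw [← Finset.sum_attach t.1 (fun u => sgn u t.1 * extc K d f (t.1.erase u))]
  show (∑ v ∈ t.1.attach, _) = _
  refine Finset.sum_congr rfl fun x _ => ?_
  rw [extc_of K d f (K.down _ _ (Finset.erase_subset _ _) t.2.1)
    (by simp [Finset.card_erase_of_mem x.2, t.2.2])]
  rfl

lemma sgn_erase {u : V} (w : V) {t : Finset V} (hu : u ∈ t) :
    sgn w t = (if ordV u < ordV w then (-1 : ℚ) else 1) * sgn w (t.erase u) := by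
  unfold sgn
  rw [Finset.filter_erase]
  by_cases h : ordV u < ordV w
  · rw [if_pos h]
    have hmem : u ∈ t.filter fun x => ordV x < ordV w := Finset.mem_filter.mpr ⟨hu, h⟩
    rw [← Finset.card_erase_add_one hmem, pow_succ]
    ring
  · rw [if_neg h, Finset.erase_eq_of_notMem
      (a := u) (s := t.filter fun x => ordV x < ordV w)
      (fun hc => h (Finset.mem_filter.mp hc).2), one_mul]

lemma sgn_swap {u v : V} {t : Finset V} (hu : u ∈ t) (hv : v ∈ t) (huv : u ≠ v) :
    sgn u t * sgn v (t.erase u) = -(sgn v t * sgn u (t.erase v)) := by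
  have h1 := sgn_erase (u := v) u (t := t) hv
  have h2 := sgn_erase (u := u) v (t := t) hu
  have hord : ordV u ≠ ordV v := fun h => huv (ordV_inj h)
  rcases lt_or_gt_of_ne hord with h | h
  · rw [if_neg (by omega)] at h1
    rw [if_pos h] at h2
    rw [h1, h2]; ring
  · rw [if_pos h] at h1
    rw [if_neg (by omega)] at h2
    rw [h1, h2]; ring

lemma sgn_swap' {u v : V} {t : Finset V} (hu : u ∈ t) (hv : v ∈ t) (huv : u ≠ v) :
    sgn u (t.erase v) * sgn v (t.erase u) = -(sgn u t * sgn v t) := by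
  have h1 := sgn_erase (u := v) u (t := t) hv
  have h2 := sgn_erase (u := u) v (t := t) hu
  have hord : ordV u ≠ ordV v := fun h => huv (ordV_inj h)
  rcases lt_or_gt_of_ne hord with h | h
  · rw [if_neg (by omega)] at h1
    rw [if_pos h] at h2
    rw [h1, h2]; ring
  · rw [if_pos h] at h1
    rw [if_neg (by omega)] at h2
    rw [h1, h2]; ring

lemma delta_delta (K : SCpx V) (d : ℕ) (h : cochain K d) :
    delta K (d + 1) (delta K d h) = 0 := by
  funext T
  rw [delta_apply, Pi.zero_apply]
  have hrw : ∀ u ∈ T.1, sgn u T.1 * extc K (d + 1) (delta K d h) (T.1.erase u)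
      = ∑ w ∈ T.1.erase u,
          sgn u T.1 * (sgn w (T.1.erase u) * extc K d h ((T.1.erase u).erase w)) := by
    intro u hu
    rw [extc_of K (d + 1) _ (K.down _ _ (Finset.erase_subset _ _) T.2.1)
      (by simp [Finset.card_erase_of_mem hu, T.2.2]), delta_apply, Finset.mul_sum]
  rw [Finset.sum_congr rfl hrw]
  set F : V → V → ℚ := fun u w =>
    sgn u T.1 * (sgn w (T.1.erase u) * extc K d h ((T.1.erase u).erase w)) with hF
  have hanti : ∀ u ∈ T.1, ∀ w ∈ T.1.erase u, F u w = -F w u := by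
    intro u hu w hw
    have hwT : w ∈ T.1 := Finset.mem_of_mem_erase hw
    have hne : u ≠ w := fun hc => (Finset.mem_erase.mp hw).1 hc.symm
    have hs := sgn_swap hu hwT hne
    simp only [hF]
    rw [Finset.erase_right_comm (a := u) (b := w)]
    linear_combination extc K d h ((T.1.erase w).erase u) * hs
  have hcomm : ∑ u ∈ T.1, ∑ w ∈ T.1.erase u, F u w
      = ∑ w ∈ T.1, ∑ u ∈ T.1.erase w, F u w := by
    refine Finset.sum_comm' fun x y => ?_
    simp only [Finset.mem_erase]
    constructor
    · rintro ⟨hx, hyx, hy⟩; exact ⟨⟨fun hc => hyx hc.symm, hx⟩, hy⟩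
    · rintro ⟨⟨hxy, hx⟩, hy⟩; exact ⟨hx, fun hc => hxy hc.symm, hy⟩
  have : ∑ u ∈ T.1, ∑ w ∈ T.1.erase u, F u w
      = -∑ u ∈ T.1, ∑ w ∈ T.1.erase u, F u w := by
    conv_lhs => rw [hcomm]
    rw [← Finset.sum_neg_distrib]
    refine Finset.sum_congr rfl fun w hw => ?_
    rw [← Finset.sum_neg_distrib]
    exact Finset.sum_congr rfl fun u hu => by rw [hanti w hw u hu]; ring
  linarith

def restr (G : SimpleGraph V) (S : Finset V) : SCpx V where
  faces := {s | s ⊆ S ∧ ∀ u ∈ s, ∀ w ∈ s, ¬ G.Adj u w}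
  down := fun s t hst ht => ⟨hst.trans ht.1, fun u hu w hw => ht.2 u (hst hu) w (hst hw)⟩

lemma mem_restr {G : SimpleGraph V} {S : Finset V} {s : Finset V} :
    s ∈ (restr G S).faces ↔ s ⊆ S ∧ ∀ u ∈ s, ∀ w ∈ s, ¬ G.Adj u w := Iff.rfl

lemma insert_mem_restr {G : SimpleGraph V} {S : Finset V} {s : Finset V} {v : V}
    (hv : v ∈ S) (hs : s ∈ (restr G S).faces) (hadj : ∀ w ∈ s, ¬ G.Adj v w) :
    insert v s ∈ (restr G S).faces := by
  refine ⟨Finset.insert_subset hv hs.1, ?_⟩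
  intro u hu w hw hA
  rcases Finset.mem_insert.mp hu with h1 | h1
  · rcases Finset.mem_insert.mp hw with h2 | h2
    · cases h1; cases h2; exact G.irrefl hA
    · cases h1; exact hadj w h2 hA
  · rcases Finset.mem_insert.mp hw with h2 | h2
    · cases h2; exact hadj u h1 hA.symm
    · exact hs.2 u h1 w h2 hA

/-- Cone lemma: if `v ∈ S` is isolated in `S`, every cocycle of positive degree
on `restr G S` is a coboundary. -/
lemma cone_case (G : SimpleGraph V) (S : Finset V) (v : V) (hv : v ∈ S)
    (hiso : ∀ w ∈ S, ¬ G.Adj v w) (e : ℕ)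
    (f : cochain (restr G S) (e + 1)) (hf : delta (restr G S) (e + 1) f = 0) :
    ∃ g : cochain (restr G S) e, delta (restr G S) e g = f := by
  classical
  have hins : ∀ s : Finset V, s ∈ (restr G S).faces → insert v s ∈ (restr G S).faces :=
    fun s hs => insert_mem_restr hv hs (fun w hw => hiso w (hs.1 hw))
  refine ⟨fun s => if v ∈ s.1 then 0 else
    sgn v (insert v s.1) * extc (restr G S) (e + 1) f (insert v s.1), ?_⟩
  funext t
  rw [delta_apply]
  by_cases hvt : v ∈ t.1
  · -- faces containing v : only the u = v term survives
    rw [Finset.sum_eq_single_of_mem v hvt ?side]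
    case side =>
      intro u hu hune
      have hface : t.1.erase u ∈ (restr G S).faces :=
        (restr G S).down _ _ (Finset.erase_subset _ _) t.2.1
      have hcard : (t.1.erase u).card = e := by
        simp [Finset.card_erase_of_mem hu, t.2.2]
      rw [extc_of (restr G S) e _ hface hcard]
      show sgn u t.1 * (if v ∈ t.1.erase u then (0:ℚ) else
        sgn v (insert v (t.1.erase u)) * extc (restr G S) (e + 1) f (insert v (t.1.erase u))) = 0
      rw [if_pos (Finset.mem_erase.mpr ⟨fun h => hune h.symm, hvt⟩), mul_zero]
    have hface : t.1.erase v ∈ (restr G S).faces :=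
      (restr G S).down _ _ (Finset.erase_subset _ _) t.2.1
    have hcard : (t.1.erase v).card = e := by
      simp [Finset.card_erase_of_mem hvt, t.2.2]
    rw [extc_of (restr G S) e _ hface hcard]
    show sgn v t.1 * (if v ∈ t.1.erase v then (0:ℚ) else
      sgn v (insert v (t.1.erase v)) * extc (restr G S) (e + 1) f (insert v (t.1.erase v))) = f t
    rw [if_neg (Finset.notMem_erase v t.1), Finset.insert_erase hvt, extc_val,
      ← mul_assoc, sgn_sq, one_mul]
  · -- faces not containing v : use the cocycle condition at `insert v t`
    have hT : insert v t.1 ∈ (restr G S).faces := hins _ t.2.1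
    have hTc : (insert v t.1).card = e + 1 + 1 := by
      rw [Finset.card_insert_of_notMem hvt, t.2.2]
    have h0 : delta (restr G S) (e + 1) f ⟨insert v t.1, hT, hTc⟩ = 0 := by rw [hf]; rfl
    rw [delta_apply] at h0
    have h0' : ∑ u ∈ insert v t.1, sgn u (insert v t.1) *
        extc (restr G S) (e + 1) f ((insert v t.1).erase u) = 0 := h0
    rw [Finset.sum_insert hvt, Finset.erase_insert hvt, extc_val] at h0'
    have hsum : ∑ u ∈ t.1, sgn u (insert v t.1) *
        extc (restr G S) (e + 1) f ((insert v t.1).erase u)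
        = -(sgn v (insert v t.1) * f t) := by linarith
    have hterm : ∀ u ∈ t.1, sgn u t.1 * extc (restr G S) e
        (fun s => if v ∈ s.1 then 0 else
          sgn v (insert v s.1) * extc (restr G S) (e + 1) f (insert v s.1)) (t.1.erase u)
        = -(sgn v (insert v t.1)) *
            (sgn u (insert v t.1) * extc (restr G S) (e + 1) f ((insert v t.1).erase u)) := by
      intro u hu
      have hune : u ≠ v := fun h => hvt (h ▸ hu)
      have hface : t.1.erase u ∈ (restr G S).faces :=
        (restr G S).down _ _ (Finset.erase_subset _ _) t.2.1
      have hcard : (t.1.erase u).card = e := by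
        simp [Finset.card_erase_of_mem hu, t.2.2]
      have h1 : v ∉ t.1.erase u := fun h => hvt (Finset.mem_of_mem_erase h)
      have h2 : (insert v t.1).erase u = insert v (t.1.erase u) :=
        Finset.erase_insert_of_ne (fun h => hune h.symm)
      rw [extc_of (restr G S) e _ hface hcard]
      show sgn u t.1 * (if v ∈ t.1.erase u then (0:ℚ) else
        sgn v (insert v (t.1.erase u)) * extc (restr G S) (e + 1) f (insert v (t.1.erase u))) = _
      rw [if_neg h1, ← h2]
      have hs := sgn_swap' (t := insert v t.1)
        (Finset.mem_insert_of_mem hu) (Finset.mem_insert_self v t.1) hune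
      rw [Finset.erase_insert hvt] at hs
      linear_combination extc (restr G S) (e + 1) f ((insert v t.1).erase u) * hs
    rw [Finset.sum_congr rfl hterm, ← Finset.mul_sum, hsum]
    have hsq := sgn_sq v (insert v t.1)
    linear_combination f t * hsq

lemma empty_case (G : SimpleGraph V) (e : ℕ) (f : cochain (restr G ∅) (e + 1)) :
    ∃ g : cochain (restr G ∅) e, delta (restr G ∅) e g = f := by
  refine ⟨0, ?_⟩
  rw [map_zero]
  funext t
  exfalso
  have h1 : t.1 = ∅ := Finset.subset_empty.mp t.2.1.1
  have h2 := t.2.2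
  rw [h1] at h2
  simp at h2

lemma main_ind (G : SimpleGraph V) : ∀ (n : ℕ) (S : Finset V), S.card ≤ n →
    ∀ (e : ℕ), S.card < 2 * (e + 1) →
    ∀ f : cochain (restr G S) (e + 1), delta (restr G S) (e + 1) f = 0 →
    ∃ g : cochain (restr G S) e, delta (restr G S) e g = f := by
  classical
  intro n
  induction n with
  | zero =>
    intro S hS e _ f _
    have : S = ∅ := Finset.card_eq_zero.mp (Nat.le_antisymm hS (Nat.zero_le _))
    subst this
    exact empty_case G e f
  | succ n ih =>
    intro S hSn e hSe f hf
    by_cases hSempty : S = ∅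
    · subst hSempty; exact empty_case G e f
    by_cases hedge : ∃ v ∈ S, ∃ w ∈ S, G.Adj v w
    · -- a vertex with a neighbour inside S : Mayer–Vietoris style chase
      obtain ⟨v, hv, w, hw, hvw⟩ := hedge
      have hvwne : v ≠ w := G.ne_of_adj hvw
      have hcard2 : 2 ≤ S.card := by
        have hsub : ({v, w} : Finset V) ⊆ S := by
          intro x hx
          rcases Finset.mem_insert.mp hx with rfl | hx
          · exact hv
          · rw [Finset.mem_singleton.mp hx]; exact hw
        calc 2 = ({v, w} : Finset V).card := (Finset.card_pair hvwne).symm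
          _ ≤ S.card := Finset.card_le_card hsub
      obtain ⟨e', rfl⟩ : ∃ e', e = e' + 1 := by
        cases e with
        | zero => exact absurd hSe (by omega)
        | succ e' => exact ⟨e', rfl⟩
      -- Step 1 : restrict f to the subcomplex of faces avoiding v, solve there
      have hBsub : ∀ s : Finset V, s ∈ (restr G (S.erase v)).faces → s ∈ (restr G S).faces :=
        fun s hs => ⟨hs.1.trans (Finset.erase_subset v S), hs.2⟩
      have hrho : delta (restr G (S.erase v)) (e' + 1 + 1)
          (fun s => extc (restr G S) (e' + 1 + 1) f s.1) = 0 := by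
        funext t
        rw [delta_apply, Pi.zero_apply]
        have h0 : delta (restr G S) (e' + 1 + 1) f ⟨t.1, hBsub _ t.2.1, t.2.2⟩ = 0 := by
          rw [hf]; rfl
        rw [delta_apply] at h0
        have hterm : ∀ u ∈ t.1, sgn u t.1 * extc (restr G (S.erase v)) (e' + 1 + 1)
            (fun s => extc (restr G S) (e' + 1 + 1) f s.1) (t.1.erase u)
            = sgn u t.1 * extc (restr G S) (e' + 1 + 1) f (t.1.erase u) := by
          intro u hu
          have hBf : t.1.erase u ∈ (restr G (S.erase v)).faces :=
            (restr G (S.erase v)).down _ _ (Finset.erase_subset _ _) t.2.1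
          have hc : (t.1.erase u).card = e' + 1 + 1 := by
            simp [Finset.card_erase_of_mem hu, t.2.2]
          rw [extc_of _ _ _ hBf hc]
        rw [Finset.sum_congr rfl hterm]
        exact h0
      obtain ⟨g1, hg1⟩ := ih (S.erase v)
        (by have := Finset.card_erase_of_mem hv; omega)
        (e' + 1)
        (by have := Finset.card_erase_of_mem hv; omega)
        (fun s => extc (restr G S) (e' + 1 + 1) f s.1) hrho
      -- Step 2 : extend g1 by zero and correct f
      set g1' : cochain (restr G S) (e' + 1) := (fun s => if v ∈ s.1 then 0 else
        extc (restr G (S.erase v)) (e' + 1) g1 s.1) with hg1'def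
      have hP2 : ∀ t : {s : Finset V // s ∈ (restr G S).faces ∧ s.card = e' + 1 + 1},
          v ∉ t.1 → delta (restr G S) (e' + 1) g1' t = f t := by
        intro t hvt
        rw [delta_apply]
        have hBt : t.1 ∈ (restr G (S.erase v)).faces :=
          ⟨Finset.subset_erase.mpr ⟨t.2.1.1, hvt⟩, t.2.1.2⟩
        have h1 : delta (restr G (S.erase v)) (e' + 1) g1 ⟨t.1, hBt, t.2.2⟩
            = extc (restr G S) (e' + 1 + 1) f t.1 := congrFun hg1 ⟨t.1, hBt, t.2.2⟩
        rw [delta_apply, extc_val] at h1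
        have hterm : ∀ u ∈ t.1, sgn u t.1 * extc (restr G S) (e' + 1) g1' (t.1.erase u)
            = sgn u t.1 * extc (restr G (S.erase v)) (e' + 1) g1 (t.1.erase u) := by
          intro u hu
          have hKf : t.1.erase u ∈ (restr G S).faces :=
            (restr G S).down _ _ (Finset.erase_subset _ _) t.2.1
          have hc : (t.1.erase u).card = e' + 1 := by
            simp [Finset.card_erase_of_mem hu, t.2.2]
          rw [extc_of _ _ _ hKf hc]
          show sgn u t.1 * (if v ∈ t.1.erase u then (0 : ℚ) else
            extc (restr G (S.erase v)) (e' + 1) g1 (t.1.erase u)) = _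
          rw [if_neg (fun h => hvt (Finset.mem_of_mem_erase h))]
        rw [Finset.sum_congr rfl hterm]
        exact h1
      set f2 : cochain (restr G S) (e' + 1 + 1) := f - delta (restr G S) (e' + 1) g1'
        with hf2def
      have hf2 : delta (restr G S) (e' + 1 + 1) f2 = 0 := by
        rw [hf2def, map_sub, hf, delta_delta]
        simp
      have hf2avoid : ∀ t : {s : Finset V // s ∈ (restr G S).faces ∧ s.card = e' + 1 + 1},
          v ∉ t.1 → f2 t = 0 := by
        intro t hvt
        rw [hf2def]
        show f t - delta (restr G S) (e' + 1) g1' t = 0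
        rw [hP2 t hvt, sub_self]
      -- Step 3 : the part of f2 supported on faces containing v, viewed on S2
      set S2 := S.filter (fun x => x ≠ v ∧ ¬ G.Adj v x) with hS2def
      have hS2sub : S2 ⊆ S := Finset.filter_subset _ _
      have hvS2 : v ∉ S2 := by simp [hS2def]
      have hS2card : S2.card + 2 ≤ S.card := by
        have h1 : S2 ⊆ (S.erase v).erase w := by
          intro x hx
          simp only [hS2def, Finset.mem_filter] at hx
          refine Finset.mem_erase.mpr ⟨?_, Finset.mem_erase.mpr ⟨hx.2.1, hx.1⟩⟩
          rintro rfl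
          exact hx.2.2 hvw
        have h2 := Finset.card_le_card h1
        rw [Finset.card_erase_of_mem (Finset.mem_erase.mpr ⟨fun h => hvwne h.symm, hw⟩),
          Finset.card_erase_of_mem hv] at h2
        omega
      have hAins : ∀ s : Finset V, s ∈ (restr G S2).faces →
          insert v s ∈ (restr G S).faces := by
        intro s hs
        have hsK : s ∈ (restr G S).faces := ⟨hs.1.trans hS2sub, hs.2⟩
        refine insert_mem_restr hv hsK ?_
        intro x hx
        have hx2 := hs.1 hx
        simp only [hS2def, Finset.mem_filter] at hx2
        exact hx2.2.2
      have hKerase : ∀ s : Finset V, s ∈ (restr G S).faces → v ∈ s →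
          s.erase v ∈ (restr G S2).faces := by
        intro s hs hvs
        refine ⟨?_, fun x hx y hy =>
          hs.2 x (Finset.mem_of_mem_erase hx) y (Finset.mem_of_mem_erase hy)⟩
        intro x hx
        have hxs := Finset.mem_of_mem_erase hx
        simp only [hS2def, Finset.mem_filter]
        exact ⟨hs.1 hxs, (Finset.mem_erase.mp hx).1, fun h => hs.2 v hvs x hxs h⟩
      set a : cochain (restr G S2) (e' + 1) := (fun s =>
        sgn v (insert v s.1) * extc (restr G S) (e' + 1 + 1) f2 (insert v s.1)) with hadef
      have ha : delta (restr G S2) (e' + 1) a = 0 := by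
        funext t
        rw [delta_apply, Pi.zero_apply]
        have hvt : v ∉ t.1 := fun h => hvS2 (t.2.1.1 h)
        have hTK : insert v t.1 ∈ (restr G S).faces := hAins _ t.2.1
        have hTc : (insert v t.1).card = e' + 1 + 1 + 1 := by
          rw [Finset.card_insert_of_notMem hvt, t.2.2]
        have h0 : delta (restr G S) (e' + 1 + 1) f2 ⟨insert v t.1, hTK, hTc⟩ = 0 := by
          rw [hf2]; rfl
        rw [delta_apply] at h0
        have h0' : ∑ u ∈ insert v t.1, sgn u (insert v t.1) *
            extc (restr G S) (e' + 1 + 1) f2 ((insert v t.1).erase u) = 0 := h0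
        rw [Finset.sum_insert hvt, Finset.erase_insert hvt] at h0'
        have hzero : extc (restr G S) (e' + 1 + 1) f2 t.1 = 0 := by
          have htK : t.1 ∈ (restr G S).faces := ⟨t.2.1.1.trans hS2sub, t.2.1.2⟩
          rw [extc_of _ _ _ htK t.2.2]
          exact hf2avoid ⟨t.1, htK, t.2.2⟩ hvt
        rw [hzero, mul_zero, zero_add] at h0'
        have hterm : ∀ u ∈ t.1, sgn u t.1 * extc (restr G S2) (e' + 1) a (t.1.erase u)
            = -(sgn v (insert v t.1)) * (sgn u (insert v t.1) *
                extc (restr G S) (e' + 1 + 1) f2 ((insert v t.1).erase u)) := by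
          intro u hu
          have hune : u ≠ v := fun h => hvt (h ▸ hu)
          have hface : t.1.erase u ∈ (restr G S2).faces :=
            (restr G S2).down _ _ (Finset.erase_subset _ _) t.2.1
          have hc : (t.1.erase u).card = e' + 1 := by
            simp [Finset.card_erase_of_mem hu, t.2.2]
          have h2 : (insert v t.1).erase u = insert v (t.1.erase u) :=
            Finset.erase_insert_of_ne (fun h => hune h.symm)
          rw [extc_of _ _ _ hface hc]
          show sgn u t.1 * (sgn v (insert v (t.1.erase u)) *
            extc (restr G S) (e' + 1 + 1) f2 (insert v (t.1.erase u))) = _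
          rw [← h2]
          have hs := sgn_swap' (t := insert v t.1)
            (Finset.mem_insert_of_mem hu) (Finset.mem_insert_self v t.1) hune
          rw [Finset.erase_insert hvt] at hs
          linear_combination extc (restr G S) (e' + 1 + 1) f2 ((insert v t.1).erase u) * hs
        rw [Finset.sum_congr rfl hterm, ← Finset.mul_sum, h0', mul_zero]
      -- Step 4 : solve on S2 by induction
      obtain ⟨b, hb⟩ := ih S2 (by omega) e' (by omega) a ha
      -- Step 5 : lift b back and conclude
      set b' : cochain (restr G S) (e' + 1) := (fun s => if v ∈ s.1 then
        -(sgn v s.1 * extc (restr G S2) e' b (s.1.erase v)) else 0) with hb'def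
      refine ⟨g1' + b', ?_⟩
      rw [map_add]
      funext t
      show delta (restr G S) (e' + 1) g1' t + delta (restr G S) (e' + 1) b' t = f t
      by_cases hvt : v ∈ t.1
      · -- v ∈ t : the b' part produces f2
        have hAface : t.1.erase v ∈ (restr G S2).faces := hKerase _ t.2.1 hvt
        have hAc : (t.1.erase v).card = e' + 1 := by
          simp [Finset.card_erase_of_mem hvt, t.2.2]
        have h1 : delta (restr G S2) e' b ⟨t.1.erase v, hAface, hAc⟩
            = a ⟨t.1.erase v, hAface, hAc⟩ := congrFun hb _
        rw [delta_apply] at h1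
        have h2 : a ⟨t.1.erase v, hAface, hAc⟩ = sgn v t.1 * f2 t := by
          show sgn v (insert v (t.1.erase v)) *
            extc (restr G S) (e' + 1 + 1) f2 (insert v (t.1.erase v)) = _
          rw [Finset.insert_erase hvt, extc_val]
        rw [h2] at h1
        have hdb : delta (restr G S) (e' + 1) b' t = f2 t := by
          rw [delta_apply]
          rw [← Finset.add_sum_erase t.1
            (fun u => sgn u t.1 * extc (restr G S) (e' + 1) b' (t.1.erase u)) hvt]
          have hv0 : sgn v t.1 * extc (restr G S) (e' + 1) b' (t.1.erase v) = 0 := by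
            have hface : t.1.erase v ∈ (restr G S).faces :=
              (restr G S).down _ _ (Finset.erase_subset _ _) t.2.1
            rw [extc_of _ _ _ hface hAc]
            show sgn v t.1 * (if v ∈ t.1.erase v then
              -(sgn v (t.1.erase v) * extc (restr G S2) e' b ((t.1.erase v).erase v))
              else (0 : ℚ)) = 0
            rw [if_neg (Finset.notMem_erase v t.1), mul_zero]
          rw [hv0, zero_add]
          have hterm : ∀ u ∈ t.1.erase v,
              sgn u t.1 * extc (restr G S) (e' + 1) b' (t.1.erase u)
              = sgn v t.1 * (sgn u (t.1.erase v) *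
                  extc (restr G S2) e' b ((t.1.erase v).erase u)) := by
            intro u hu'
            obtain ⟨hune', hu⟩ := Finset.mem_erase.mp hu'
            have hface : t.1.erase u ∈ (restr G S).faces :=
              (restr G S).down _ _ (Finset.erase_subset _ _) t.2.1
            have hc : (t.1.erase u).card = e' + 1 := by
              simp [Finset.card_erase_of_mem hu, t.2.2]
            rw [extc_of _ _ _ hface hc]
            show sgn u t.1 * (if v ∈ t.1.erase u then
              -(sgn v (t.1.erase u) * extc (restr G S2) e' b ((t.1.erase u).erase v))
              else (0 : ℚ)) = _
            rw [if_pos (Finset.mem_erase.mpr ⟨fun h => hune' h.symm, hvt⟩),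
              Finset.erase_right_comm (a := u) (b := v)]
            have hs := sgn_swap hu hvt hune'
            linear_combination -(extc (restr G S2) e' b ((t.1.erase v).erase u)) * hs
          rw [Finset.sum_congr rfl hterm, ← Finset.mul_sum, h1, ← mul_assoc, sgn_sq, one_mul]
        have hsplit : f2 t = f t - delta (restr G S) (e' + 1) g1' t := by
          rw [hf2def]; rfl
        rw [hdb, hsplit]
        ring
      · -- v ∉ t : the b' part vanishes
        have hb0 : delta (restr G S) (e' + 1) b' t = 0 := by
          rw [delta_apply]
          refine Finset.sum_eq_zero fun u hu => ?_
          have hface : t.1.erase u ∈ (restr G S).faces :=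
            (restr G S).down _ _ (Finset.erase_subset _ _) t.2.1
          have hc : (t.1.erase u).card = e' + 1 := by
            simp [Finset.card_erase_of_mem hu, t.2.2]
          rw [extc_of _ _ _ hface hc]
          show sgn u t.1 * (if v ∈ t.1.erase u then
            -(sgn v (t.1.erase u) * extc (restr G S2) e' b ((t.1.erase u).erase v))
            else (0 : ℚ)) = 0
          rw [if_neg (fun h => hvt (Finset.mem_of_mem_erase h)), mul_zero]
        rw [hb0, hP2 t hvt, add_zero]
    · -- no edge inside S : the complex is a cone over any vertex of S
      push_neg at hedge
      obtain ⟨v, hv⟩ := Finset.nonempty_of_ne_empty hSempty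
      exact cone_case G S v hv (fun w hw => hedge v hv w hw) e f hf

lemma SCpx.faces_ext {K L : SCpx V} (h : K.faces = L.faces) : K = L := by
  cases K; cases L; cases h; rfl

lemma indepCpx_eq_restr_univ (G : SimpleGraph V) :
    indepCpx G = restr G Finset.univ := by
  apply SCpx.faces_ext
  ext s
  simp [indepCpx, restr, Finset.subset_univ]

lemma vanish (G : SimpleGraph V) (d : ℕ) (hd : 1 ≤ d)
    (hcard : Fintype.card V < 2 * d) :
    Module.finrank ℚ (Hq (restr G Finset.univ) d) = 0 := by
  obtain ⟨e, rfl⟩ : ∃ e, d = e + 1 := ⟨d - 1, by omega⟩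
  have hsub : Subsingleton (Hq (restr G Finset.univ) (e + 1)) := by
    rw [Submodule.Quotient.subsingleton_iff, Submodule.eq_top_iff']
    intro x
    rw [Submodule.mem_comap]
    have hx : delta (restr G Finset.univ) (e + 1) x.1 = 0 := LinearMap.mem_ker.mp x.2
    obtain ⟨g, hg⟩ := main_ind G (Fintype.card V) Finset.univ
      (le_of_eq (Finset.card_univ)) e (by rwa [Finset.card_univ]) x.1 hx
    show (x : cochain (restr G Finset.univ) (e + 1)) ∈
      prevRange (restr G Finset.univ) (e + 1)
    show (x : cochain (restr G Finset.univ) (e + 1)) ∈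
      LinearMap.range (delta (restr G Finset.univ) e)
    exact ⟨g, hg⟩
  exact Module.finrank_zero_of_subsingleton


/-- For a graph `G` with `m` vertices, `H̃^r(I(G); ℚ) = 0`
whenever `r > m/2 - 1`, i.e. whenever `m < 2r + 2`. -/
theorem stmt2 (G : SimpleGraph V) (r : ℤ) (hr : (Fintype.card V : ℤ) < 2 * r + 2) :
    reducedBetti (indepCpx G) r = 0 := by
  by_cases hneg : r < -1
  · simp [reducedBetti, hneg]
  have hc0 : (0 : ℤ) ≤ (Fintype.card V : ℤ) := Int.natCast_nonneg _
  have hr0 : 0 ≤ r := by omega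
  rw [reducedBetti, if_neg hneg, indepCpx_eq_restr_univ]
  exact vanish G ((r + 1).toNat) (by omega) (by omega)
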